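/- Let B ⊂ ℝ^{k-1} × [0,∞) be a closed subset containing k+1 affinely independent points, such that whenever x, y ∈ B with x_k < y_k (last coordinates), the ray {x + t(y−x) : t ≥ 0} is contained in B. Then B = ℝ^{k-1} × [a,∞) for some a ≥ 0. -/

import Mathlib

set_option maxHeartbeats 1000000


/-- Let `B ⊂ ℝ^{k-1} × [0,∞)` be a closed set containing `k+1` affinely independent
points such that whenever `x, y ∈ B` with `x_k < y_k`, the ray from `x` through `y`
is contained in `B`. Then `B = ℝ^{k-1} × [a,∞)` for some `a ≥ 0`. -/
theorem stmt_16 (k : ℕ) (hk : 1 ≤ k) (B : Set (Fin k → ℝ)) (hB : IsClosed B)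
    (hhalf : ∀ x ∈ B, 0 ≤ x ⟨k - 1, by omega⟩)
    (haff : ∃ p : Fin (k + 1) → Fin k → ℝ, (∀ i, p i ∈ B) ∧ AffineIndependent ℝ p)
    (hray : ∀ x ∈ B, ∀ y ∈ B, x ⟨k - 1, by omega⟩ < y ⟨k - 1, by omega⟩ →
      ∀ t : ℝ, 0 ≤ t → x + t • (y - x) ∈ B) :
    ∃ a : ℝ, 0 ≤ a ∧ B = {x : Fin k → ℝ | a ≤ x ⟨k - 1, by omega⟩} := by
  obtain ⟨p, hpB, hpa⟩ := haff
  set j : Fin k := ⟨k - 1, by omega⟩ with hj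
  -- the unit vector in direction j
  set e : Fin k → ℝ := Pi.single j 1 with he
  have hej : e j = 1 := by simp [he]
  have hsmul : ∀ (t : ℝ) (x : Fin k → ℝ), (t • x) j = t * x j := fun t x => rfl
  have hadd : ∀ (x y : Fin k → ℝ), (x + y) j = x j + y j := fun x y => rfl
  have hsub : ∀ (x y : Fin k → ℝ), (x - y) j = x j - y j := fun x y => rfl
  -- affine span of range p is everything
  have hcard : Fintype.card (Fin (k + 1)) = Module.finrank ℝ (Fin k → ℝ) + 1 := by
    simp [Module.finrank_pi]
  have hspanp : affineSpan ℝ (Set.range p) = ⊤ :=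
    hpa.affineSpan_eq_top_iff_card_eq_finrank_add_one.2 hcard
  have hspanB : affineSpan ℝ B = ⊤ := by
    rw [eq_top_iff, ← hspanp]
    exact affineSpan_mono ℝ (Set.range_subset_iff.2 hpB)
  -- Step 1: there exist points with distinct last coordinates
  have hxy : ∃ x ∈ B, ∃ y ∈ B, x j < y j := by
    by_contra h
    push_neg at h
    have hconst : ∀ x ∈ B, x j = p 0 j := fun x hx =>
      le_antisymm (h (p 0) (hpB 0) x hx) (h x hx (p 0) (hpB 0))
    -- B is contained in the affine hyperplane through p 0 with direction ker of proj
    set H : AffineSubspace ℝ (Fin k → ℝ) :=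
      AffineSubspace.mk' (p 0) (LinearMap.ker (LinearMap.proj j)) with hH
    have hBH : B ⊆ (H : Set (Fin k → ℝ)) := by
      intro x hx
      rw [hH, AffineSubspace.mem_coe, AffineSubspace.mem_mk']
      simp only [LinearMap.mem_ker, LinearMap.proj_apply]
      show (x - p 0) j = 0
      rw [hsub, hconst x hx, sub_self]
    have hHt : (⊤ : AffineSubspace ℝ (Fin k → ℝ)) ≤ H := by
      rw [← hspanB]; exact affineSpan_le.2 hBH
    have : (p 0 + e) ∈ H := hHt trivial
    rw [hH, AffineSubspace.mem_mk'] at this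
    simp only [LinearMap.mem_ker, LinearMap.proj_apply] at this
    have : (p 0 + e - p 0) j = 0 := this
    rw [hsub, hadd, hej] at this
    linarith
  obtain ⟨x0, hx0, y0, hy0, hxy0⟩ := hxy
  -- Step 2: B contains points with arbitrarily high last coordinate
  have hhigh : ∀ h : ℝ, ∃ z ∈ B, h < z j := by
    intro h
    have hd : 0 < y0 j - x0 j := by linarith
    set t : ℝ := max 0 ((h - x0 j + 1) / (y0 j - x0 j)) with ht
    refine ⟨x0 + t • (y0 - x0), hray x0 hx0 y0 hy0 hxy0 t (le_max_left _ _), ?_⟩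
    rw [hadd, hsmul, hsub]
    have h1 : (h - x0 j + 1) / (y0 j - x0 j) ≤ t := le_max_right _ _
    have h2 : (h - x0 j + 1) / (y0 j - x0 j) * (y0 j - x0 j) ≤ t * (y0 j - x0 j) :=
      mul_le_mul_of_nonneg_right h1 hd.le
    rw [div_mul_cancel₀ _ hd.ne'] at h2
    linarith
  -- Step 3: B is convex
  have hconv : Convex ℝ B := by
    intro u hu w hw α β hα hβ hαβ
    rcases lt_trichotomy (u j) (w j) with hc | hc | hc
    · have := hray u hu w hw hc β hβ
      have heq : α • u + β • w = u + β • (w - u) := by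
        have hα1 : α = 1 - β := by linarith
        rw [hα1]; module
      rwa [heq]
    · -- equal heights: approximate
      obtain ⟨z, hz, hzj⟩ := hhigh (u j)
      have hzu : u j < z j := hzj
      have hmem : ∀ n : ℕ, w + α • ((u + ((n : ℝ) + 1)⁻¹ • (z - u)) - w) ∈ B := by
        intro n
        have hn : (0 : ℝ) ≤ ((n : ℝ) + 1)⁻¹ := by positivity
        have hun : u + ((n : ℝ) + 1)⁻¹ • (z - u) ∈ B := hray u hu z hz hzu _ hn
        have hwun : w j < (u + ((n : ℝ) + 1)⁻¹ • (z - u)) j := by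
          rw [hadd, hsmul, hsub, ← hc]
          have : 0 < ((n : ℝ) + 1)⁻¹ * (z j - u j) := by
            have : (0:ℝ) < ((n : ℝ) + 1)⁻¹ := by positivity
            nlinarith
          linarith
        exact hray w hw _ hun hwun α hα
      have hform : ∀ n : ℕ, w + α • ((u + ((n : ℝ) + 1)⁻¹ • (z - u)) - w)
          = (α • u + β • w) + ((n : ℝ) + 1)⁻¹ • (α • (z - u)) := by
        intro n
        have hβ1 : β = 1 - α := by linarith
        rw [hβ1]; module
      have htend : Filter.Tendsto
          (fun n : ℕ => (α • u + β • w) + ((n : ℝ) + 1)⁻¹ • (α • (z - u)))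
          Filter.atTop (nhds (α • u + β • w)) := by
        have h0 : Filter.Tendsto (fun n : ℕ => ((n : ℝ) + 1)⁻¹) Filter.atTop (nhds 0) := by
          simpa [one_div] using (tendsto_one_div_add_atTop_nhds_zero_nat : Filter.Tendsto (fun n : ℕ => 1 / ((n : ℝ) + 1)) Filter.atTop (nhds 0))
        have := (h0.smul_const (α • (z - u))).const_add (α • u + β • w)
        simpa using this
      refine hB.mem_of_tendsto htend ?_
      filter_upwards with n
      rw [← hform n]; exact hmem n
    · have := hray w hw u hu hc α hα
      have heq : α • u + β • w = w + α • (u - w) := by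
        have hβ1 : β = 1 - α := by linarith
        rw [hβ1]; module
      rwa [heq]
  -- Step 4: B has nonempty interior
  obtain ⟨c, hc⟩ := (hconv.interior_nonempty_iff_affineSpan_eq_top).2 hspanB
  obtain ⟨δ, hδ, hball⟩ := Metric.mem_nhds_iff.1 (mem_interior_iff_mem_nhds.1 hc)
  have hcB : c ∈ B := interior_subset hc
  -- Step 5: everything strictly above c is in B
  have habove : ∀ z : Fin k → ℝ, c j < z j → z ∈ B := by
    intro z hz
    set r : ℝ := δ / (2 * (‖c - z‖ + 1)) with hr
    have hrpos : 0 < r := by positivity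
    set w : Fin k → ℝ := c + r • (c - z) with hw
    have hwB : w ∈ B := by
      apply hball
      rw [Metric.mem_ball, hw, dist_eq_norm]
      have : c + r • (c - z) - c = r • (c - z) := by module
      rw [this, norm_smul, Real.norm_eq_abs, abs_of_pos hrpos]
      have h1 : ‖c - z‖ < ‖c - z‖ + 1 := by linarith
      calc r * ‖c - z‖ ≤ r * (‖c - z‖ + 1) := by nlinarith [norm_nonneg (c - z)]
        _ = δ / 2 := by rw [hr]; field_simp
        _ < δ := by linarith
    have hwc : w j < c j := by
      rw [hw, hadd, hsmul, hsub]
      nlinarith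
    set t : ℝ := (1 + r) / r with hT
    have htr : t * r = 1 + r := div_mul_cancel₀ _ hrpos.ne'
    have ht0 : 0 ≤ t := by positivity
    have hkey : w + t • (c - w) = z := by
      have h1 : c - w = r • (z - c) := by rw [hw]; module
      rw [h1, smul_smul, htr, hw]; module
    have := hray w hwB c hcB hwc t ht0
    rwa [hkey] at this
  -- Define a as the infimum of last coordinates over B
  set S : Set ℝ := (fun x : Fin k → ℝ => x j) '' B with hS
  have hSne : S.Nonempty := ⟨p 0 j, p 0, hpB 0, rfl⟩
  have hSbdd : BddBelow S := ⟨0, fun y ⟨x, hx, hxy⟩ => hxy ▸ hhalf x hx⟩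
  set a : ℝ := sInf S with ha
  have ha0 : 0 ≤ a := le_csInf hSne (fun y ⟨x, hx, hxy⟩ => hxy ▸ hhalf x hx)
  have hBsub : ∀ x ∈ B, a ≤ x j := fun x hx => csInf_le hSbdd ⟨x, hx, rfl⟩
  -- everything strictly above a is in B
  have hgt : ∀ z : Fin k → ℝ, a < z j → z ∈ B := by
    intro z hz
    obtain ⟨b, ⟨w, hwB, hwb⟩, hb⟩ := exists_lt_of_csInf_lt hSne hz
    have hwz : w j < z j := by rw [show w j = b from hwb]; exact hb
    have hd : 0 < z j - w j := by linarith
    set t : ℝ := max 1 ((c j - w j + 1) / (z j - w j)) with ht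
    have ht1 : (1 : ℝ) ≤ t := le_max_left _ _
    have htpos : 0 < t := by linarith
    set y : Fin k → ℝ := w + t • (z - w) with hy
    have hyj : c j < y j := by
      rw [hy, hadd, hsmul, hsub]
      have h1 : (c j - w j + 1) / (z j - w j) ≤ t := le_max_right _ _
      have h2 : (c j - w j + 1) / (z j - w j) * (z j - w j) ≤ t * (z j - w j) :=
        mul_le_mul_of_nonneg_right h1 hd.le
      rw [div_mul_cancel₀ _ hd.ne'] at h2
      linarith
    have hyB : y ∈ B := habove y hyj
    have hwy : w j < y j := by
      rw [hy, hadd, hsmul, hsub]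
      nlinarith
    have hkey : w + t⁻¹ • (y - w) = z := by
      have h1 : y - w = t • (z - w) := by rw [hy]; module
      rw [h1, smul_smul, inv_mul_cancel₀ htpos.ne']; module
    have := hray w hwB y hyB hwy t⁻¹ (by positivity)
    rwa [hkey] at this
  refine ⟨a, ha0, ?_⟩
  ext z
  simp only [Set.mem_setOf_eq]
  constructor
  · exact fun hzB => hBsub z hzB
  · intro hz
    rcases eq_or_lt_of_le hz with heq | hlt
    · -- z j = a: take a limit from above
      have hmem : ∀ n : ℕ, z + ((n : ℝ) + 1)⁻¹ • e ∈ B := by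
        intro n
        apply hgt
        rw [hadd, hsmul, hej, ← heq]
        have : (0:ℝ) < ((n : ℝ) + 1)⁻¹ := by positivity
        linarith
      have htend : Filter.Tendsto (fun n : ℕ => z + ((n : ℝ) + 1)⁻¹ • e)
          Filter.atTop (nhds z) := by
        have h0 : Filter.Tendsto (fun n : ℕ => ((n : ℝ) + 1)⁻¹) Filter.atTop (nhds 0) := by
          simpa [one_div] using (tendsto_one_div_add_atTop_nhds_zero_nat : Filter.Tendsto (fun n : ℕ => 1 / ((n : ℝ) + 1)) Filter.atTop (nhds 0))
        have := (h0.smul_const e).const_add z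
        simpa using this
      exact hB.mem_of_tendsto htend (Filter.Eventually.of_forall hmem)
    · exact hgt z hlt
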